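/- Let q ≥ 4 be an integer, β ≥ 0 and h < 0. Suppose Φ_{β,h}^{(q)} has both a symmetric global minimizer x^S, satisfying x^S₁ < x^S₂ = ... = x^S_q, and an asymmetric global minimizer x^A, satisfying x^A₁ < x^A₂ = ... = x^A_{q−1} < x^A_q. Then x^A₁ < x^S₁ and x^S_q < x^A_q. Moreover, there exists a constant c_q > 0, depending only on q, such that for every β ≥ 0 and every h < 0 at which both such global minimizers exist, one has Σ_{k=1}^{q} (x^A_k)² − Σ_{k=1}^{q} (x^S_k)² ≥ c_q. -/

import Mathlib

open Real Set

noncomputable section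

/-- The probability simplex `Δ_q`. -/
def pottsSimplex (q : ℕ) : Set (Fin q → ℝ) :=
  {x | (∀ k, 0 ≤ x k) ∧ ∑ k, x k = 1}

/-- The mean-field free-energy function `Φ_{β,h}^{(q)}` of the `q`-state Potts model. -/
noncomputable def pottsPhi (q : ℕ) [NeZero q] (β h : ℝ) (x : Fin q → ℝ) : ℝ :=
  (∑ k, (-(β / 2) * x k ^ 2 + x k * Real.log (x k))) - h * x 0

/-- `x` is a global minimizer of `Φ_{β,h}^{(q)}` on `Δ_q`. -/
def IsPottsMinimizer (q : ℕ) [NeZero q] (β h : ℝ) (x : Fin q → ℝ) : Prop :=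
  x ∈ pottsSimplex q ∧ ∀ y ∈ pottsSimplex q, pottsPhi q β h x ≤ pottsPhi q β h y

/-- The last coordinate index of `Fin q` (corresponding to `x_q`). -/
def lastIdx (q : ℕ) [NeZero q] : Fin q :=
  ⟨q - 1, Nat.sub_lt (Nat.pos_of_ne_zero (NeZero.ne q)) Nat.one_pos⟩

/-- `k` is one of the "middle" indices `2,…,q-1` (i.e. `1,…,q-2` in 0-based indexing). -/
def IsMid (q : ℕ) [NeZero q] (k : Fin q) : Prop := k ≠ 0 ∧ k ≠ lastIdx q

/-- The symmetric form `x₁ < x₂ = x₃ = … = x_q`. -/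
def SymMinForm (q : ℕ) [NeZero q] (x : Fin q → ℝ) : Prop :=
  (∀ j k : Fin q, j ≠ 0 → k ≠ 0 → x j = x k) ∧ (∀ k : Fin q, k ≠ 0 → x 0 < x k)

/-- The asymmetric form `x₁ < x₂ = … = x_{q-1} < x_q`. -/
def AsymForm (q : ℕ) [NeZero q] (x : Fin q → ℝ) : Prop :=
  (∀ j k : Fin q, IsMid q j → IsMid q k → x j = x k) ∧
  (∀ j : Fin q, IsMid q j → x 0 < x j) ∧
  (∀ j : Fin q, IsMid q j → x j < x (lastIdx q))

lemma nonneg_of_deriv_nonneg' {a b : ℝ} (hab : a ≤ b) {F F' : ℝ → ℝ}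
    (hF : ∀ t ∈ Set.Icc a b, HasDerivAt F (F' t) t)
    (hF' : ∀ t ∈ Set.Ioo a b, 0 ≤ F' t) (hFa : 0 ≤ F a) : 0 ≤ F b := by
  have hmono : MonotoneOn F (Set.Icc a b) := by
    apply monotoneOn_of_deriv_nonneg (convex_Icc a b)
    · exact fun t ht => (hF t ht).continuousAt.continuousWithinAt
    · intro t ht
      rw [interior_Icc] at ht
      exact (hF t (Set.mem_Icc_of_Ioo ht)).differentiableAt.differentiableWithinAt
    · intro t ht
      rw [interior_Icc] at ht
      rw [(hF t (Set.mem_Icc_of_Ioo ht)).deriv]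
      exact hF' t ht
  exact le_trans hFa (hmono (Set.left_mem_Icc.2 hab) (Set.right_mem_Icc.2 hab) hab)

lemma nonneg_of_deriv_nonpos' {a b : ℝ} (hab : a ≤ b) {F F' : ℝ → ℝ}
    (hF : ∀ t ∈ Set.Icc a b, HasDerivAt F (F' t) t)
    (hF' : ∀ t ∈ Set.Ioo a b, F' t ≤ 0) (hFb : 0 ≤ F b) : 0 ≤ F a := by
  have hmono : AntitoneOn F (Set.Icc a b) := by
    apply antitoneOn_of_deriv_nonpos (convex_Icc a b)
    · exact fun t ht => (hF t ht).continuousAt.continuousWithinAt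
    · intro t ht
      rw [interior_Icc] at ht
      exact (hF t (Set.mem_Icc_of_Ioo ht)).differentiableAt.differentiableWithinAt
    · intro t ht
      rw [interior_Icc] at ht
      rw [(hF t (Set.mem_Icc_of_Ioo ht)).deriv]
      exact hF' t ht
  exact le_trans hFb (hmono (Set.left_mem_Icc.2 hab) (Set.right_mem_Icc.2 hab) hab)

/-- `log t ≤ (t - 1/t)/2` for `t ≥ 1`. -/
lemma log_le_half_sub_inv {t : ℝ} (ht : 1 ≤ t) : Real.log t ≤ (t - 1/t)/2 := by
  have h := nonneg_of_deriv_nonneg' (a := 1) (b := t) ht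
    (F := fun s => (s - 1/s)/2 - Real.log s)
    (F' := fun s => (1 + 1/s^2)/2 - 1/s)
    (by
      intro s hs
      have hs0 : (0:ℝ) < s := lt_of_lt_of_le one_pos hs.1
      have h1 : HasDerivAt (fun s : ℝ => (s - 1/s)/2 - Real.log s)
          ((1 - (-(s^2)⁻¹))/2 - s⁻¹) s := by
        have hinv : HasDerivAt (fun s : ℝ => 1/s) (-(s^2)⁻¹) s := by
          simpa [one_div] using hasDerivAt_inv (ne_of_gt hs0)
        exact (((hasDerivAt_id s).sub hinv).div_const 2).sub (Real.hasDerivAt_log (ne_of_gt hs0))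
      convert h1 using 1
      field_simp
      ring
    )
    (by
      intro s hs
      have hs0 : (0:ℝ) < s := lt_of_lt_of_le one_pos (le_of_lt hs.1)
      have key : 2*s ≤ s^2 + 1 := by nlinarith [sq_nonneg (s-1)]
      have h2 : 1/s ≤ (1 + 1/s^2)/2 := by
        rw [div_le_div_iff₀ hs0 (by positivity)]
        have : (1 + 1/s^2) = (s^2+1)/s^2 := by field_simp
        rw [this]
        rw [div_mul_eq_mul_div, le_div_iff₀ (by positivity)]
        nlinarith [sq_nonneg s, sq_nonneg (s-1), hs0]
      linarith
    )
    (by norm_num)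
  linarith

/-- logarithmic mean ≤ arithmetic mean: `2(v-u)/(u+v) ≤ log v - log u`. -/
lemma log_mean_ineq {u v : ℝ} (hu : 0 < u) (huv : u ≤ v) :
    2*(v-u)/(u+v) ≤ Real.log v - Real.log u := by
  have hv : 0 < v := lt_of_lt_of_le hu huv
  have hr : 1 ≤ v/u := (one_le_div hu).2 huv
  have core : 2 - 4/(v/u+1) ≤ Real.log (v/u) := by
    have h := nonneg_of_deriv_nonneg' (a := 1) (b := v/u) hr
      (F := fun s => Real.log s - (2 - 4/(s+1)))
      (F' := fun s => s⁻¹ - 4*((s+1)^2)⁻¹)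
      (by
        intro s hs
        have hs0 : (0:ℝ) < s := lt_of_lt_of_le one_pos hs.1
        have hs1 : s + 1 ≠ 0 := by positivity
        have hinv : HasDerivAt (fun s : ℝ => 4/(s+1)) (-(4 * ((s+1)^2)⁻¹)) s := by
          have h0 : HasDerivAt (fun s : ℝ => s + 1) 1 s := (hasDerivAt_id s).add_const 1
          have h1 : HasDerivAt (fun s : ℝ => (s+1)⁻¹) (-1/(s+1)^2) s := by
            exact h0.inv hs1
          have h2 := h1.const_mul (4:ℝ)
          have : (4:ℝ) * (-1/(s+1)^2) = -(4 * ((s+1)^2)⁻¹) := by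
            field_simp
          rw [this] at h2
          simpa [div_eq_mul_inv] using h2
        have := (Real.hasDerivAt_log (ne_of_gt hs0)).sub (((hasDerivAt_const s (2:ℝ)).sub hinv))
        refine this.congr_deriv ?_
        ring
      )
      (by
        intro s hs
        have hs0 : (0:ℝ) < s := lt_of_lt_of_le one_pos (le_of_lt hs.1)
        have key : 4*s ≤ (s+1)^2 := by nlinarith [sq_nonneg (s-1)]
        have h1 : 4*((s+1)^2)⁻¹ ≤ s⁻¹ := by
          rw [← one_div, ← one_div, mul_one_div, div_le_div_iff₀ (by positivity) hs0]
          nlinarith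
        linarith
      )
      (by norm_num)
    linarith
  have hlog : Real.log (v/u) = Real.log v - Real.log u := Real.log_div (ne_of_gt hv) (ne_of_gt hu)
  rw [hlog] at core
  refine le_trans (le_of_eq ?_) core
  have huv0 : u + v ≠ 0 := by positivity
  have : v/u + 1 = (v+u)/u := by field_simp
  rw [this]
  field_simp
  ring

/-- Taylor bound for `t ↦ t log t`:
`(x+δ) log (x+δ) ≤ x log x + δ (log x + 1) + δ²/(2c)` whenever `0 < c ≤ min(x, x+δ)`. -/
lemma xlogx_taylor {x δ c : ℝ} (hc : 0 < c) (hcx : c ≤ x) (hcd : c ≤ x + δ) :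
    (x+δ)*Real.log (x+δ) ≤ x*Real.log x + δ*(Real.log x + 1) + δ^2/(2*c) := by
  have hx : 0 < x := lt_of_lt_of_le hc hcx
  set F : ℝ → ℝ := fun w => x*Real.log x + w*(Real.log x + 1) + w^2/(2*c) - (x+w)*Real.log (x+w) with hF
  set F' : ℝ → ℝ := fun w => (Real.log x + 1) + w/c - (Real.log (x+w) + 1) with hF'
  have hF0 : F 0 = 0 := by simp [hF]
  have hderiv : ∀ w : ℝ, 0 < x + w → HasDerivAt F (F' w) w := by
    intro w hw
    have h1 : HasDerivAt (fun w : ℝ => (x+w)*Real.log (x+w)) (Real.log (x+w) + 1) w := by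
      have houter := Real.hasDerivAt_mul_log (ne_of_gt hw)
      have := houter.comp_const_add x w
      simpa using this
    have h2 : HasDerivAt (fun w : ℝ => x*Real.log x + w*(Real.log x + 1) + w^2/(2*c))
        ((Real.log x + 1) + w/c) w := by
      have ha : HasDerivAt (fun w : ℝ => w*(Real.log x + 1)) (Real.log x + 1) w := by
        simpa using (hasDerivAt_id w).mul_const (Real.log x + 1)
      have hb : HasDerivAt (fun w : ℝ => w^2/(2*c)) (2*w/(2*c)) w := by
        have := (hasDerivAt_pow 2 w).div_const (2*c)
        simpa [mul_comm, mul_div_assoc] using this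
      have := (ha.const_add (x*Real.log x)).add hb
      refine this.congr_deriv ?_
      field_simp
    exact h2.sub h1
  rcases le_or_gt 0 δ with hδ | hδ
  · -- nonneg branch on [0, δ]
    have h := nonneg_of_deriv_nonneg' (a := 0) (b := δ) hδ (F := F) (F' := F')
      (by
        intro t ht
        exact hderiv t (by nlinarith [ht.1])
      )
      (by
        intro t ht
        have ht0 : 0 < t := ht.1
        have hxt : 0 < x + t := by linarith
        have hlog : Real.log (x+t) - Real.log x ≤ t/x := by
          have := Real.log_le_sub_one_of_pos (x := (x+t)/x) (by positivity)
          rw [Real.log_div (ne_of_gt hxt) (ne_of_gt hx)] at this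
          have : Real.log (x+t) - Real.log x ≤ (x+t)/x - 1 := this
          calc Real.log (x+t) - Real.log x ≤ (x+t)/x - 1 := this
          _ = t/x := by field_simp; ring
        have htx : t/x ≤ t/c := by
          apply div_le_div_of_nonneg_left (le_of_lt ht0) hc hcx
        simp only [hF']
        linarith
      )
      (by rw [hF0])
    simpa [hF] using h
  · -- nonpos branch on [δ, 0]
    have h := nonneg_of_deriv_nonpos' (a := δ) (b := 0) (le_of_lt hδ) (F := F) (F' := F')
      (by
        intro t ht
        have : c ≤ x + t := by nlinarith [ht.1]
        exact hderiv t (by linarith)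
      )
      (by
        intro t ht
        have ht0 : t < 0 := ht.2
        have hxt : c ≤ x + t := by nlinarith [le_of_lt ht.1]
        have hxt0 : 0 < x + t := lt_of_lt_of_le hc hxt
        have hlog : Real.log x - Real.log (x+t) ≤ -t/(x+t) := by
          have := Real.log_le_sub_one_of_pos (x := x/(x+t)) (by positivity)
          rw [Real.log_div (ne_of_gt hx) (ne_of_gt hxt0)] at this
          calc Real.log x - Real.log (x+t) ≤ x/(x+t) - 1 := this
          _ = -t/(x+t) := by field_simp; ring
        have htx : -t/(x+t) ≤ -t/c := by
          apply div_le_div_of_nonneg_left (by linarith) hc hxt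
        simp only [hF']
        have : t/c ≤ Real.log (x+t) - Real.log x := by
          have h1 : Real.log x - Real.log (x+t) ≤ -t/c := le_trans hlog htx
          have : -(t/c) = -t/c := by ring
          linarith [neg_div c t]
        linarith
      )
      (by rw [hF0])
    simpa [hF] using h

/-- key numeric consequence of stationarity + stability -/
lemma potts_numeric {X Y : ℝ} (hX : 0 < X) (hXY : X < Y) (h1 : 2 ≤ X + Y)
    (h2 : 3*X*Y ≤ 2*X + Y) : X < 1 ∧ 1 < Y ∧ 2/3 ≤ Y - X := by
  have hY : 0 < Y := lt_trans hX hXY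
  have hXlt1 : X < 1 := by
    by_contra hcon
    push_neg at hcon
    have hY1 : 1 < Y := lt_of_le_of_lt hcon hXY
    nlinarith [mul_pos hX (sub_pos.2 hY1), mul_nonneg (le_of_lt hY) (by linarith : (0:ℝ) ≤ X - 1)]
  have hY1 : 1 < Y := by linarith
  refine ⟨hXlt1, hY1, ?_⟩
  by_contra hcon
  push_neg at hcon
  have hX23 : 2/3 < X := by linarith
  have h3X1 : 0 < 3*X - 1 := by linarith
  -- (2-X)(3X-1) ≤ Y(3X-1) ≤ 2X  ⇒  (3X-2)(X-1) ≥ 0 ⇒ X ≥ 1, contradiction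
  have hY2X : Y * (3*X - 1) ≤ 2*X := by nlinarith
  have hY2 : 2 - X ≤ Y := by linarith
  nlinarith [mul_le_mul_of_nonneg_right hY2 (le_of_lt h3X1)]

/-- strict monotonicity of `t ↦ log t - β t` on the increasing branch -/
lemma f_strict {β u v : ℝ} (hu : 0 < u) (huv : u < v) (hv1 : β*v ≤ 1) :
    Real.log u - β*u < Real.log v - β*v := by
  have hv : 0 < v := lt_trans hu huv
  have h1 : Real.log u - Real.log v < u/v - 1 := by
    have := Real.log_lt_sub_one_of_pos (x := u/v) (by positivity) (by
      intro hcon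
      rw [div_eq_one_iff_eq (ne_of_gt hv)] at hcon
      exact (ne_of_lt huv) hcon)
    rw [Real.log_div (ne_of_gt hu) (ne_of_gt hv)] at this
    linarith
  have h2 : u/v - 1 ≤ β*(u-v) := by
    rw [div_sub_one (ne_of_gt hv), div_le_iff₀ hv]
    nlinarith
  nlinarith

/-- coordinate-wise free energy summand -/
noncomputable def pG (q : ℕ) [NeZero q] (β h : ℝ) (k : Fin q) (t : ℝ) : ℝ :=
  -(β/2)*t^2 + t*Real.log t - (if k = 0 then h*t else 0)

lemma phi_eq_sum (q : ℕ) [NeZero q] (β h : ℝ) (x : Fin q → ℝ) :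
    pottsPhi q β h x = ∑ k, pG q β h k (x k) := by
  unfold pottsPhi pG
  rw [Finset.sum_sub_distrib]
  congr 1
  rw [Finset.sum_ite_eq' Finset.univ (0 : Fin q) (fun k => h * x k)]
  simp

lemma sum_comp_update (q : ℕ) [NeZero q] (G : Fin q → ℝ → ℝ) (x : Fin q → ℝ) (i : Fin q) (v : ℝ) :
    ∑ k, G k (Function.update x i v k) = (∑ k, G k (x k)) + (G i v - G i (x i)) := by
  classical
  have h1 : ∀ k : Fin q, G k (Function.update x i v k)
      = G k (x k) + (if k = i then G i v - G i (x i) else 0) := by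
    intro k
    by_cases hk : k = i
    · subst hk; simp
    · simp [Function.update_of_ne hk, hk]
  rw [Finset.sum_congr rfl (fun k _ => h1 k), Finset.sum_add_distrib,
    Finset.sum_ite_eq' Finset.univ i (fun _ => G i v - G i (x i))]
  simp

lemma sum_eq_two (q : ℕ) [NeZero q] (F : Fin q → ℝ) (v : ℝ)
    (hv : ∀ k, k ≠ 0 → F k = v) : ∑ k, F k = F 0 + ((q:ℝ)-1)*v := by
  classical
  have h0 : (0 : Fin q) ∈ Finset.univ := Finset.mem_univ _
  rw [← Finset.add_sum_erase Finset.univ F h0]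
  congr 1
  rw [Finset.sum_congr rfl (fun k hk => hv k (Finset.ne_of_mem_erase hk))]
  rw [Finset.sum_const, Finset.card_erase_of_mem h0, Finset.card_univ, Fintype.card_fin]
  have hq1 : 1 ≤ q := Nat.pos_of_ne_zero (NeZero.ne q)
  rw [nsmul_eq_mul]
  congr 1
  push_cast [Nat.cast_sub hq1]
  ring

lemma sum_eq_three (q : ℕ) [NeZero q] (hq : 2 ≤ q) (F : Fin q → ℝ) (v : ℝ)
    (hv : ∀ k, k ≠ 0 → k ≠ lastIdx q → F k = v) :
    ∑ k, F k = F 0 + F (lastIdx q) + ((q:ℝ)-2)*v := by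
  classical
  have hL0 : lastIdx q ≠ 0 := by
    unfold lastIdx
    intro hcon
    have := congrArg Fin.val hcon
    simp at this
    omega
  have h0 : (0 : Fin q) ∈ Finset.univ := Finset.mem_univ _
  have hL : lastIdx q ∈ Finset.univ.erase (0 : Fin q) :=
    Finset.mem_erase.2 ⟨hL0, Finset.mem_univ _⟩
  rw [← Finset.add_sum_erase Finset.univ F h0, ← Finset.add_sum_erase _ F hL]
  rw [add_assoc]
  congr 1
  congr 1
  have : ∀ k ∈ (Finset.univ.erase (0:Fin q)).erase (lastIdx q), F k = v := by
    intro k hk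
    have hk1 := Finset.ne_of_mem_erase hk
    have hk2 := Finset.ne_of_mem_erase (Finset.mem_of_mem_erase hk)
    exact hv k hk2 hk1
  rw [Finset.sum_congr rfl this, Finset.sum_const,
    Finset.card_erase_of_mem hL, Finset.card_erase_of_mem h0, Finset.card_univ, Fintype.card_fin]
  rw [nsmul_eq_mul]
  congr 1
  push_cast [Nat.cast_sub (by omega : 1 ≤ q), Nat.cast_sub (by omega : 1 ≤ q - 1)]
  ring

lemma pG_hasDerivAt (q : ℕ) [NeZero q] (β h : ℝ) (k : Fin q) {t : ℝ} (ht : 0 < t) :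
    HasDerivAt (pG q β h k) (-β*t + (Real.log t + 1) - (if k = 0 then h else 0)) t := by
  have h1 : HasDerivAt (fun s : ℝ => -(β/2)*s^2) (-(β/2)*(2*t^1)) t := by
    exact (hasDerivAt_pow 2 t).const_mul (-(β/2)) |>.congr_deriv (by push_cast; ring)
  have h2 := Real.hasDerivAt_mul_log (ne_of_gt ht)
  have h3 : HasDerivAt (fun s : ℝ => (if k = 0 then h*s else 0)) (if k = 0 then h else 0) t := by
    by_cases hk : k = 0
    · simp only [hk, if_true]
      simpa [mul_comm] using (hasDerivAt_id t).const_mul h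
    · simp only [hk, if_false]
      exact hasDerivAt_const t 0
  have := (h1.add h2).sub h3
  unfold pG
  refine this.congr_deriv ?_
  ring

/-- First-order condition at an interior pair of coordinates. -/
lemma potts_foc (q : ℕ) [NeZero q] (β h : ℝ) (x : Fin q → ℝ)
    (hmin : IsPottsMinimizer q β h x) (j k : Fin q) (hjk : j ≠ k)
    (hj : 0 < x j) (hk : 0 < x k) :
    Real.log (x j) - β * x j - (if j = 0 then h else 0)
      = Real.log (x k) - β * x k - (if k = 0 then h else 0) := by
  classical
  set G := pG q β h with hG
  set φ : ℝ → ℝ := fun u =>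
    ((∑ i, G i (x i)) - G j (x j) - G k (x k)) + (G j (x j + u) + G k (x k - u)) with hφ
  have hδ : 0 < min (x j) (x k) := lt_min hj hk
  -- φ u = pottsPhi of the perturbed point, for all u
  have hφval : ∀ u : ℝ, φ u = pottsPhi q β h
      (Function.update (Function.update x j (x j + u)) k (x k - u)) := by
    intro u
    rw [phi_eq_sum, sum_comp_update, sum_comp_update]
    rw [Function.update_of_ne (Ne.symm hjk)]
    simp only [hφ]
    ring
  have hmem : ∀ u ∈ Set.Ioo (-(min (x j) (x k))) (min (x j) (x k)),
      (Function.update (Function.update x j (x j + u)) k (x k - u)) ∈ pottsSimplex q := by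
    intro u hu
    constructor
    · intro i
      rcases eq_or_ne i k with hik | hik
      · rw [hik, Function.update_self]
        linarith [hu.2, min_le_right (x j) (x k)]
      · rw [Function.update_of_ne hik]
        rcases eq_or_ne i j with hij | hij
        · rw [hij, Function.update_self]
          linarith [hu.1, min_le_left (x j) (x k)]
        · rw [Function.update_of_ne hij]
          exact hmin.1.1 i
    · have hsum := hmin.1.2
      have e1 := sum_comp_update q (fun _ t => t) x j (x j + u)
      have e2 := sum_comp_update q (fun _ t => t) (Function.update x j (x j + u)) k (x k - u)
      rw [e2, e1, Function.update_of_ne (Ne.symm hjk)]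
      linarith [hsum]
  have hloc : IsLocalMin φ 0 := by
    have hball : Set.Ioo (-(min (x j) (x k))) (min (x j) (x k)) ∈ nhds (0:ℝ) :=
      Ioo_mem_nhds (by linarith) hδ
    refine Filter.eventually_of_mem hball (fun u hu => ?_)
    have h1 : φ 0 = pottsPhi q β h x := by
      rw [hφval 0]
      congr 1
      funext i
      rcases eq_or_ne i k with hik | hik
      · rw [hik, Function.update_self]; ring
      · rw [Function.update_of_ne hik]
        rcases eq_or_ne i j with hij | hij
        · rw [hij, Function.update_self]; ring
        · rw [Function.update_of_ne hij]
    rw [h1, hφval u]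
    exact hmin.2 _ (hmem u hu)
  have hD : HasDerivAt φ ((-β*(x j) + (Real.log (x j) + 1) - (if j = 0 then h else 0))
      - (-β*(x k) + (Real.log (x k) + 1) - (if k = 0 then h else 0))) 0 := by
    have hj' : HasDerivAt (fun u : ℝ => G j (x j + u))
        (-β*(x j) + (Real.log (x j) + 1) - (if j = 0 then h else 0)) 0 := by
      have houter := pG_hasDerivAt q β h j (t := x j + 0) (by linarith)
      have := houter.comp_const_add (x j) 0
      simpa using this
    have hk' : HasDerivAt (fun u : ℝ => G k (x k - u))
        (-(-β*(x k) + (Real.log (x k) + 1) - (if k = 0 then h else 0))) 0 := by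
      have houter := pG_hasDerivAt q β h k (t := x k - 0) (by simpa using hk)
      have hcomp := houter.comp_const_sub (x k) 0
      simpa using hcomp
    have := (hj'.add hk').const_add ((∑ i, G i (x i)) - G j (x j) - G k (x k))
    simpa [hφ, sub_eq_add_neg] using this
  have hzero := hloc.deriv_eq_zero
  rw [hD.deriv] at hzero
  have : (-β*(x j) + (Real.log (x j) + 1) - (if j = 0 then h else 0))
      = (-β*(x k) + (Real.log (x k) + 1) - (if k = 0 then h else 0)) := by linarith
  linarith [this]

/-- At a global minimizer the first coordinate is strictly positive
(provided some other coordinate is). -/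
lemma potts_pos_zero (q : ℕ) [NeZero q] (β h : ℝ) (hβ : 0 ≤ β) (x : Fin q → ℝ)
    (hmin : IsPottsMinimizer q β h x) (j : Fin q) (hj0 : j ≠ 0) (hxj : 0 < x j) :
    0 < x 0 := by
  classical
  by_contra h0
  have hx00 : x 0 = 0 := le_antisymm (not_lt.1 h0) (hmin.1.1 0)
  set w := x j with hw
  set C : ℝ := -h + β*w - Real.log w with hC
  set u : ℝ := min (w/2) (Real.exp (-C-1)) with hu
  have hu0 : 0 < u := lt_min (by linarith) (Real.exp_pos _)
  have huw2 : u ≤ w/2 := min_le_left _ _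
  have huexp : u ≤ Real.exp (-C-1) := min_le_right _ _
  have hwu : 0 < w - u := by linarith
  set y := Function.update (Function.update x j (w - u)) 0 u with hy
  have hymem : y ∈ pottsSimplex q := by
    constructor
    · intro i
      rcases eq_or_ne i 0 with hi0 | hi0
      · rw [hy, hi0, Function.update_self]; linarith
      · rw [hy, Function.update_of_ne hi0]
        rcases eq_or_ne i j with hij | hij
        · rw [hij, Function.update_self]; linarith
        · rw [Function.update_of_ne hij]; exact hmin.1.1 i
    · have e1 := sum_comp_update q (fun _ t => t) x j (w - u)
      have e2 := sum_comp_update q (fun _ t => t) (Function.update x j (w - u)) 0 u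
      rw [hy, e2, e1, Function.update_of_ne (Ne.symm hj0)]
      rw [hx00]
      have := hmin.1.2
      linarith
  have hΦ : pottsPhi q β h y = pottsPhi q β h x
      + (pG q β h j (w-u) - pG q β h j w) + (pG q β h 0 u - pG q β h 0 0) := by
    rw [phi_eq_sum, phi_eq_sum, hy, sum_comp_update, sum_comp_update]
    rw [Function.update_of_ne (Ne.symm hj0), hx00]
    try ring
  -- bound the difference
  have hpG0 : pG q β h 0 0 = 0 := by
    simp [pG]
  have hbound1 : pG q β h 0 u ≤ u * Real.log u - h*u := by
    simp only [pG, if_pos rfl, if_true]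
    nlinarith [sq_nonneg u, hβ]
  have htaylor : (w - u)*Real.log (w-u) ≤ w*Real.log w + (-u)*(Real.log w + 1) + (-u)^2/(2*(w-u)) := by
    have := xlogx_taylor (x := w) (δ := -u) (c := w - u) hwu (by linarith) (by linarith)
    convert this using 2 <;> ring
  have hbound2 : pG q β h j (w-u) - pG q β h j w ≤ β*w*u - u*(Real.log w + 1) + u/2 := by
    simp only [pG, if_neg hj0]
    have hq1 : (-u)^2/(2*(w-u)) ≤ u/2 := by
      rw [div_le_iff₀ (by linarith)]
      have : u ≤ w - u := by linarith
      nlinarith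
    nlinarith [htaylor, sq_nonneg u, hβ, hu0]
  have hlogu : Real.log u ≤ -C-1 := by
    calc Real.log u ≤ Real.log (Real.exp (-C-1)) := Real.log_le_log hu0 huexp
    _ = -C-1 := Real.log_exp _
  have hneg : pottsPhi q β h y < pottsPhi q β h x := by
    rw [hΦ, hpG0]
    have : u * Real.log u ≤ u * (-C-1) := by
      exact mul_le_mul_of_nonneg_left hlogu (le_of_lt hu0)
    have hfinal : (pG q β h j (w-u) - pG q β h j w) + (pG q β h 0 u - 0) ≤ -u/2 := by
      have := hbound1
      have := hbound2
      simp only [hC] at *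
      nlinarith [hu0]
    linarith [hu0, hfinal]
  exact absurd (hmin.2 y hymem) (not_le.2 hneg)

set_option maxHeartbeats 2000000 in
lemma potts_key (q : ℕ) [NeZero q] (hq : 4 ≤ q) (β h : ℝ) (hβ0 : 0 ≤ β) (hh : h < 0)
    (xS xA : Fin q → ℝ)
    (minS : IsPottsMinimizer q β h xS) (formS : SymMinForm q xS)
    (minA : IsPottsMinimizer q β h xA) (formA : AsymForm q xA) :
    xA 0 < xS 0 ∧ xS (lastIdx q) < xA (lastIdx q) ∧
    (∑ k, xA k ^ 2) - (∑ k, xS k ^ 2) ≥ 2*((q:ℝ)-2)/(9*(q:ℝ)^2*((q:ℝ)-1)) := by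
  classical
  have hq2 : 2 ≤ q := by omega
  set i1 : Fin q := ⟨1, by omega⟩ with hi1
  set i2 : Fin q := ⟨2, by omega⟩ with hi2
  have hLval : (lastIdx q).val = q - 1 := rfl
  have h10 : i1 ≠ 0 := by
    intro hcon; have := congrArg Fin.val hcon; simp [hi1] at this
  have h20 : i2 ≠ 0 := by
    intro hcon; have := congrArg Fin.val hcon; simp [hi2] at this
  have h12 : i1 ≠ i2 := by
    intro hcon; have := congrArg Fin.val hcon; simp [hi1, hi2] at this
  have hL0 : lastIdx q ≠ 0 := by
    intro hcon; have := congrArg Fin.val hcon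
    rw [hLval] at this; simp at this; omega
  have h1L : i1 ≠ lastIdx q := by
    intro hcon; have := congrArg Fin.val hcon
    rw [hLval] at this; simp [hi1] at this; omega
  have h2L : i2 ≠ lastIdx q := by
    intro hcon; have := congrArg Fin.val hcon
    rw [hLval] at this; simp [hi2] at this; omega
  have mid1 : IsMid q i1 := ⟨h10, h1L⟩
  set a := xS 0 with ha
  set s := xS i1 with hs
  set b := xA 0 with hb
  set m := xA i1 with hm
  set M := xA (lastIdx q) with hM
  have hs_all : ∀ k, k ≠ 0 → xS k = s := fun k hk => formS.1 k i1 hk h10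
  have has : a < s := formS.2 i1 h10
  have hm_all : ∀ k, k ≠ 0 → k ≠ lastIdx q → xA k = m :=
    fun k hk1 hk2 => formA.1 k i1 ⟨hk1, hk2⟩ mid1
  have hbm : b < m := formA.2.1 i1 mid1
  have hmM : m < M := formA.2.2 i1 mid1
  have hs0 : 0 < s := lt_of_le_of_lt (minS.1.1 0) has
  have hm0 : 0 < m := lt_of_le_of_lt (minA.1.1 0) hbm
  have hM0 : 0 < M := lt_trans hm0 hmM
  have ha0 : 0 < a := potts_pos_zero q β h hβ0 xS minS i1 h10 hs0
  have hb0 : 0 < b := potts_pos_zero q β h hβ0 xA minA i1 h10 hm0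
  have hQR : (4:ℝ) ≤ (q:ℝ) := by exact_mod_cast hq
  have hsumS : a + ((q:ℝ)-1)*s = 1 := by
    have := sum_eq_two q xS s hs_all
    rw [minS.1.2] at this; linarith
  have hsumA : b + ((q:ℝ)-2)*m + M = 1 := by
    have := sum_eq_three q hq2 xA m hm_all
    rw [minA.1.2] at this; linarith
  have hfS : Real.log a - β*a - h = Real.log s - β*s := by
    have := potts_foc q β h xS minS 0 i1 (Ne.symm h10) ha0 hs0
    simpa [if_pos rfl, if_neg h10] using this
  have hfA0 : Real.log b - β*b - h = Real.log m - β*m := by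
    have := potts_foc q β h xA minA 0 i1 (Ne.symm h10) hb0 hm0
    simpa [if_pos rfl, if_neg h10] using this
  have hfA1 : Real.log m - β*m = Real.log M - β*M := by
    have := potts_foc q β h xA minA i1 (lastIdx q) h1L hm0 hM0
    simpa [if_neg h10, if_neg hL0] using this
  have hβ : 0 < β := by
    rcases lt_or_eq_of_le hβ0 with h' | h'
    · exact h'
    · exfalso
      rw [← h'] at hfA1
      simp only [zero_mul, sub_zero] at hfA1
      have : m = M := by
        have h1 := Real.exp_log hm0
        rw [hfA1, Real.exp_log hM0] at h1
        linarith
      linarith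
  -- ===== β s ≤ 1 via explicit competitor =====
  have hβs : β * s ≤ 1 := by
    have hp2 : (2:ℝ) ≤ (q:ℝ) - 2 := by linarith
    have hp0 : (0:ℝ) < (q:ℝ) - 2 := by linarith
    set p : ℝ := (q:ℝ) - 2 with hp
    set yc : Fin q → ℝ := fun k => if k = 0 then a else if k = lastIdx q then p*s else s/p with hyc
    have hycmem : yc ∈ pottsSimplex q := by
      constructor
      · intro i
        by_cases hi0 : i = 0
        · simp [hyc, hi0]; linarith
        · by_cases hiL : i = lastIdx q
          · simp [hyc, hi0, hiL, hL0]
            exact mul_nonneg hp0.le hs0.le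
          · simp [hyc, hi0, hiL]
            exact div_nonneg hs0.le hp0.le
      · have hsp : ∀ k, k ≠ 0 → k ≠ lastIdx q → yc k = s/p := by
          intro k hk1 hk2
          simp [hyc, hk1, hk2]
        have := sum_eq_three q hq2 yc (s/p) hsp
        rw [this]
        have e0 : yc 0 = a := by simp [hyc]
        have eL : yc (lastIdx q) = p*s := by simp [hyc, hL0]
        rw [e0, eL]
        have e1 : ((q:ℝ)-2) * (s/p) = s := by
          rw [hp]; field_simp
          exact div_self (ne_of_gt hp0)
        rw [e1]
        rw [hp]; linarith [hsumS]
    have hineq := minS.2 yc hycmem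
    set A : ℝ := -(β/2)*s^2 + s*Real.log s with hA
    set B : ℝ := -(β/2)*(p*s)^2 + (p*s)*(Real.log p + Real.log s) with hB
    set C : ℝ := -(β/2)*(s/p)^2 + (s/p)*(Real.log s - Real.log p) with hC
    have hxSeval : pottsPhi q β h xS = pG q β h 0 a + A + ((q:ℝ)-2)*A := by
      rw [phi_eq_sum]
      have hv : ∀ k, k ≠ 0 → k ≠ lastIdx q → pG q β h k (xS k) = A := by
        intro k hk1 hk2
        simp only [pG, if_neg hk1, hA]
        rw [hs_all k hk1]
        ring
      have := sum_eq_three q hq2 (fun k => pG q β h k (xS k)) A hv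
      rw [this]
      have eL : pG q β h (lastIdx q) (xS (lastIdx q)) = A := by
        simp only [pG, if_neg hL0, hA]
        rw [hs_all (lastIdx q) hL0]
        ring
      rw [eL]
    have hyceval : pottsPhi q β h yc = pG q β h 0 a + B + ((q:ℝ)-2)*C := by
      rw [phi_eq_sum]
      have hv : ∀ k, k ≠ 0 → k ≠ lastIdx q → pG q β h k (yc k) = C := by
        intro k hk1 hk2
        simp only [pG, if_neg hk1, hyc, if_neg hk2, hC]
        rw [Real.log_div (ne_of_gt hs0) (ne_of_gt hp0)]
        ring
      have := sum_eq_three q hq2 (fun k => pG q β h k (yc k)) C hv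
      rw [this]
      have e0 : yc 0 = a := by simp [hyc]
      have eL : pG q β h (lastIdx q) (yc (lastIdx q)) = B := by
        have eyc : yc (lastIdx q) = p*s := by simp [hyc, hL0]
        rw [eyc]
        simp only [pG, if_neg hL0, hB]
        rw [Real.log_mul (ne_of_gt hp0) (ne_of_gt hs0)]
        ring
      rw [e0, eL]
    rw [hxSeval, hyceval] at hineq
    have hdiff : 0 ≤ (B + p*C) - (A + p*A) := by
      rw [hp]; linarith [hineq]
    have expand : p*((B + p*C) - (A + p*A))
        = p*(p-1)*s*Real.log p - (β/2)*s^2*(p-1)^2*(p+1) := by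
      rw [hA, hB, hC]
      field_simp
      ring
    have hmul : 0 ≤ p*((B + p*C) - (A + p*A)) := mul_nonneg (le_of_lt hp0) hdiff
    rw [expand] at hmul
    have hlogp : Real.log p ≤ (p^2-1)/(2*p) := by
      have h1 := log_le_half_sub_inv (t := p) (by linarith)
      have heq : (p - 1/p)/2 = (p^2-1)/(2*p) := by field_simp
      rw [heq] at h1
      exact h1
    have hmono : p*(p-1)*s*Real.log p ≤ p*(p-1)*s*((p^2-1)/(2*p)) := by
      apply mul_le_mul_of_nonneg_left hlogp
      have : (0:ℝ) ≤ p - 1 := by linarith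
      positivity
    have heq2 : p*(p-1)*s*((p^2-1)/(2*p)) = s*(p-1)^2*(p+1)/2 := by
      field_simp
      ring
    have hfin : (β/2)*s^2*(p-1)^2*(p+1) ≤ s*(p-1)^2*(p+1)/2 := by
      rw [heq2] at hmono
      linarith [hmul, hmono]
    have hp1 : (0:ℝ) < p - 1 := by linarith
    have hfac : (0:ℝ) < (p-1)^2*(p+1) := by positivity
    have e3 : (β/2)*s^2*(p-1)^2*(p+1) = ((β/2)*s^2)*((p-1)^2*(p+1)) := by ring
    have e4 : s*(p-1)^2*(p+1)/2 = (s/2)*((p-1)^2*(p+1)) := by ring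
    rw [e3, e4] at hfin
    have hss : (β/2)*s^2 ≤ s/2 := le_of_mul_le_mul_right hfin hfac
    have e5 : (β/2)*s^2 = ((β*s)/2)*s := by ring
    have e6 : s/2 = (1/2)*s := by ring
    rw [e5, e6] at hss
    have := le_of_mul_le_mul_right hss hs0
    linarith
  -- ===== second-order inequality: 3β ≤ 2/M + 1/m =====
  have hR3u : ∀ u : ℝ, 0 < u → u < m → 3*β ≤ 2/M + 1/(m - u/2) := by
    intro u hu0 hum
    have hmu2 : 0 < m - u/2 := by linarith
    have heval1 : (Function.update xA (lastIdx q) (M+u)) i1 = m := by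
      rw [Function.update_of_ne h1L]
    have heval2 : (Function.update (Function.update xA (lastIdx q) (M+u)) i1 (m-u/2)) i2 = m := by
      rw [Function.update_of_ne h12.symm, Function.update_of_ne h2L]
      exact (hm_all i2 h20 h2L)
    set yu : Fin q → ℝ := Function.update (Function.update (Function.update xA (lastIdx q) (M+u)) i1 (m-u/2)) i2 (m-u/2) with hyu
    have hymem : yu ∈ pottsSimplex q := by
      constructor
      · intro i
        rw [hyu]
        rcases eq_or_ne i i2 with hii | hii
        · rw [hii, Function.update_self]; linarith
        · rw [Function.update_of_ne hii]
          rcases eq_or_ne i i1 with hii1 | hii1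
          · rw [hii1, Function.update_self]; linarith
          · rw [Function.update_of_ne hii1]
            rcases eq_or_ne i (lastIdx q) with hiiL | hiiL
            · rw [hiiL, Function.update_self]; linarith
            · rw [Function.update_of_ne hiiL]; exact minA.1.1 i
      · have e1 := sum_comp_update q (fun _ t => t) xA (lastIdx q) (M+u)
        have e2 := sum_comp_update q (fun _ t => t) (Function.update xA (lastIdx q) (M+u)) i1 (m-u/2)
        have e3 := sum_comp_update q (fun _ t => t) (Function.update (Function.update xA (lastIdx q) (M+u)) i1 (m-u/2)) i2 (m-u/2)
        rw [hyu, e3, e2, e1, heval1, heval2]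
        have := minA.1.2
        linarith
    have hineq := minA.2 yu hymem
    have hΦyu : pottsPhi q β h yu = pottsPhi q β h xA
        + (pG q β h (lastIdx q) (M+u) - pG q β h (lastIdx q) M)
        + (pG q β h i1 (m-u/2) - pG q β h i1 m)
        + (pG q β h i2 (m-u/2) - pG q β h i2 m) := by
      rw [phi_eq_sum, phi_eq_sum, hyu, sum_comp_update, sum_comp_update, sum_comp_update,
        heval1, heval2]
      try ring
    rw [hΦyu] at hineq
    simp only [pG, if_neg hL0, if_neg h10, if_neg h20, sub_zero] at hineq
    have hT1 : (M+u)*Real.log (M+u) ≤ M*Real.log M + u*(Real.log M + 1) + u^2/(2*M) :=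
      xlogx_taylor (x := M) (δ := u) (c := M) hM0 (le_refl M) (by linarith)
    have hT2 : (m + (-(u/2)))*Real.log (m + (-(u/2))) ≤ m*Real.log m
        + (-(u/2))*(Real.log m + 1) + (-(u/2))^2/(2*(m-u/2)) :=
      xlogx_taylor (x := m) (δ := -(u/2)) (c := m - u/2) hmu2 (by linarith) (by linarith)
    have hT2' : (m - u/2)*Real.log (m - u/2) ≤ m*Real.log m
        - (u/2)*(Real.log m + 1) + (u^2/4)/(2*(m-u/2)) := by
      have e : m + (-(u/2)) = m - u/2 := by ring
      rw [e] at hT2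
      have e2 : (-(u/2))^2 = u^2/4 := by ring
      rw [e2] at hT2
      linarith
    have hstat : Real.log M - Real.log m = β*(M - m) := by linarith [hfA1]
    have hstatu : u*(Real.log M - Real.log m) = u*(β*(M - m)) := by rw [hstat]
    have hcomb : 0 ≤ -(3/4)*β*u^2 + u^2/(2*M) + 2*((u^2/4)/(2*(m-u/2))) := by
      linarith [hineq, hT1, hT2', hstatu]
    have hu2 : 0 < u^2 := by positivity
    have hfacpos : 0 ≤ -(3/4)*β + 1/(2*M) + 2*((1/4)/(2*(m-u/2))) := by
      by_contra hneg
      push_neg at hneg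
      have h1 : 0 < u^2 * (-(-(3/4)*β + 1/(2*M) + 2*((1/4)/(2*(m-u/2))))) :=
        mul_pos hu2 (by linarith)
      have h2 : -(3/4)*β*u^2 + u^2/(2*M) + 2*((u^2/4)/(2*(m-u/2)))
          = u^2 * (-(3/4)*β + 1/(2*M) + 2*((1/4)/(2*(m-u/2)))) := by
        ring
      linarith [hcomb, h1, h2]
    have hMne : M ≠ 0 := ne_of_gt hM0
    have hmune : m - u/2 ≠ 0 := ne_of_gt hmu2
    have e1 : (4:ℝ)*(1/(2*M)) = 2/M := by
      field_simp
      ring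
    have e2 : (1:ℝ)/4/(2*(m-u/2)) = (1/8)*(1/(m-u/2)) := by
      rw [div_div, show ((4:ℝ)*(2*(m-u/2))) = 8*(m-u/2) by ring, one_div, mul_inv]
      norm_num
    linarith [hfacpos, e1, e2]
  have hR3 : 3*β ≤ 2/M + 1/m := by
    by_contra hcon
    push_neg at hcon
    have hc0 : 1/m < 3*β - 2/M := by linarith
    have hcpos : 0 < 3*β - 2/M := lt_trans (by positivity) hc0
    have h1cm : 1/(3*β - 2/M) < m := by
      rw [div_lt_iff₀ hcpos]
      rw [div_lt_iff₀ hm0] at hc0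
      linarith [hc0, mul_comm m (3*β - 2/M)]
    have hu0 : 0 < m - 1/(3*β - 2/M) := by linarith
    have hum : m - 1/(3*β - 2/M) < m := by
      have : 0 < 1/(3*β - 2/M) := by positivity
      linarith
    have happ := hR3u (m - 1/(3*β - 2/M)) hu0 hum
    have hmu : m - (m - 1/(3*β - 2/M))/2 = (m + 1/(3*β - 2/M))/2 := by ring
    rw [hmu] at happ
    have hgt : 1/(3*β - 2/M) < (m + 1/(3*β - 2/M))/2 := by linarith
    have hlt : 1/((m + 1/(3*β - 2/M))/2) < 3*β - 2/M := by
      rw [div_lt_iff₀ (by linarith [h1cm, hcpos] : (0:ℝ) < (m + 1/(3*β - 2/M))/2)]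
      have hid : (3*β - 2/M) * (1/(3*β - 2/M)) = 1 :=
        mul_one_div_cancel (ne_of_gt hcpos)
      have hprod := mul_lt_mul_of_pos_left h1cm hcpos
      linarith [hprod, hid]
    linarith [happ, hlt]
  -- ===== numeric conclusions =====
  have hstat : Real.log M - Real.log m = β*(M - m) := by linarith [hfA1]
  have hXY2 : 2 ≤ β*m + β*M := by
    have hmean := log_mean_ineq hm0 (le_of_lt hmM)
    rw [hstat] at hmean
    rw [div_le_iff₀ (by positivity : (0:ℝ) < m + M)] at hmean
    by_contra hcon
    push_neg at hcon
    have hprod := mul_lt_mul_of_pos_right hcon (sub_pos.2 hmM)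
    linarith [hmean, hprod]
  have h2XY : 3*(β*m)*(β*M) ≤ 2*(β*m) + β*M := by
    have hMne : M ≠ 0 := ne_of_gt hM0
    have hmne : m ≠ 0 := ne_of_gt hm0
    have h1 : (2/M + 1/m)*(m*M) = 2*m + M := by
      field_simp [hMne, hmne]
      try ring
      try exact Or.inl trivial
    have h2 : 3*β*(m*M) ≤ 2*m + M := by
      have := mul_le_mul_of_nonneg_right hR3 (le_of_lt (mul_pos hm0 hM0))
      rw [h1] at this
      linarith
    have h3 := mul_le_mul_of_nonneg_left h2 (le_of_lt hβ)
    linarith [h3]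
  obtain ⟨hβm1, hβM1, hdge⟩ := potts_numeric (mul_pos hβ hm0)
    (mul_lt_mul_of_pos_left hmM hβ) hXY2 h2XY
  -- part 1: s < M and ordering
  have hsM : s < M := by
    by_contra hcon
    push_neg at hcon
    have : β*M ≤ β*s := mul_le_mul_of_nonneg_left hcon (le_of_lt hβ)
    linarith [hβs, hβM1]
  have hms : m < s := by
    by_contra hcon
    push_neg at hcon
    have hfsm : Real.log s - β*s ≤ Real.log m - β*m := by
      rcases eq_or_lt_of_le hcon with he | hlt
      · rw [he]
      · exact le_of_lt (f_strict hs0 hlt (le_of_lt hβm1))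
    have haleb : a ≤ b := by
      by_contra hcon2
      push_neg at hcon2
      have := f_strict hb0 hcon2 (by linarith [mul_lt_mul_of_pos_left has hβ] : β*a ≤ 1)
      linarith [hfS, hfA0]
    have h1 : ((q:ℝ)-2)*s ≤ ((q:ℝ)-2)*m := mul_le_mul_of_nonneg_left hcon (by linarith)
    linarith [hsumS, hsumA, hsM, h1, haleb, mul_le_mul_of_nonneg_left hcon (by linarith : (0:ℝ) ≤ (q:ℝ)-2)]
  have hba : b < a := by
    have hfms : Real.log m - β*m < Real.log s - β*s := f_strict hm0 hms hβs
    by_contra hcon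
    push_neg at hcon
    have : Real.log a - β*a ≤ Real.log b - β*b := by
      rcases eq_or_lt_of_le hcon with he | hlt
      · rw [he]
      · exact le_of_lt (f_strict ha0 hlt (by linarith [mul_lt_mul_of_pos_left hbm hβ] : β*b ≤ 1))
    linarith [hfS, hfA0]
  -- ===== gap =====
  have hq0R : (0:ℝ) < (q:ℝ) := by linarith
  have hβq : β ≤ (q:ℝ) := by
    have hqs : 1 < (q:ℝ)*s := by linarith [hsumS, has]
    by_contra hcon
    push_neg at hcon
    have := mul_lt_mul_of_pos_right hcon hs0
    linarith [hβs, hqs, this]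
  have hMm : 2/(3*(q:ℝ)) ≤ M - m := by
    have h1 : 2/3 ≤ β*(M-m) := by linarith [hdge]  -- ring: β*(M-m) = β*M - β*m
    have h2 : β*(M-m) ≤ (q:ℝ)*(M-m) := mul_le_mul_of_nonneg_right hβq (by linarith [hmM])
    rw [div_le_iff₀ (by positivity : (0:ℝ) < 3*(q:ℝ))]
    linarith [h1, h2]  -- small
  have hSsq : ∑ k, xS k^2 = a^2 + ((q:ℝ)-1)*s^2 := by
    have hv : ∀ k, k ≠ 0 → (fun k => xS k^2) k = s^2 := by
      intro k hk; simp only []; rw [hs_all k hk]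
    have := sum_eq_two q (fun k => xS k^2) (s^2) hv
    simpa using this
  have hAsq : ∑ k, xA k^2 = b^2 + M^2 + ((q:ℝ)-2)*m^2 := by
    have hv : ∀ k, k ≠ 0 → k ≠ lastIdx q → (fun k => xA k^2) k = m^2 := by
      intro k hk1 hk2; simp only []; rw [hm_all k hk1 hk2]
    have := sum_eq_three q hq2 (fun k => xA k^2) (m^2) hv
    simpa using this
  have hident : (b^2 + M^2 + ((q:ℝ)-2)*m^2) - (a^2 + ((q:ℝ)-1)*s^2)
      = (a-b)*(M+s-a-b) + ((q:ℝ)-2)*(s-m)*(M-m) := by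
    linear_combination (M + s) * hsumA - (M + s) * hsumS
  have hlin : M - m = (a-b) + ((q:ℝ)-1)*(s-m) := by
    linear_combination hsumA - hsumS
  have hMsab : M - m ≤ M + s - a - b := by linarith [has, hbm]
  refine ⟨hba, ?_, ?_⟩
  · rw [hs_all (lastIdx q) hL0]
    exact hsM
  rw [hSsq, hAsq, ge_iff_le]
  rw [hident]
  have hD0 : (0:ℝ) < 2/(3*(q:ℝ)) := by positivity
  rcases le_or_gt (2/(3*(q:ℝ))/2) (a-b) with hcase | hcase
  · have t1 : (2/(3*(q:ℝ))/2)*(M-m) ≤ (a-b)*(M+s-a-b) :=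
      mul_le_mul hcase hMsab (by linarith [hmM]) (by linarith [hcase, hD0])
    have t2 : (2/(3*(q:ℝ))/2)*(2/(3*(q:ℝ))) ≤ (2/(3*(q:ℝ))/2)*(M-m) :=
      mul_le_mul_of_nonneg_left hMm (by positivity)
    have t3 : 0 ≤ ((q:ℝ)-2)*(s-m)*(M-m) :=
      mul_nonneg (mul_nonneg (by linarith) (by linarith [hms])) (by linarith [hmM])
    have t4 : 2*((q:ℝ)-2)/(9*(q:ℝ)^2*((q:ℝ)-1)) ≤ (2/(3*(q:ℝ))/2)*(2/(3*(q:ℝ))) := by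
      have e : (2/(3*(q:ℝ))/2)*(2/(3*(q:ℝ))) = 2/(9*(q:ℝ)^2) := by
        field_simp
        ring
      rw [e, div_le_div_iff₀ (mul_pos (by positivity : (0:ℝ) < 9*(q:ℝ)^2) (by linarith : (0:ℝ) < (q:ℝ)-1)) (by positivity : (0:ℝ) < 9*(q:ℝ)^2)]
      have hh18 : (0:ℝ) ≤ 18*(q:ℝ)^2 := by positivity
      calc 2*((q:ℝ)-2) * (9*(q:ℝ)^2) = 18*(q:ℝ)^2*((q:ℝ)-2) := by ring
        _ ≤ 18*(q:ℝ)^2*((q:ℝ)-1) := mul_le_mul_of_nonneg_left (by linarith) hh18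
        _ = 2 * (9*(q:ℝ)^2*((q:ℝ)-1)) := by ring
    linarith [t1, t2, t3, t4]
  · have hsm2 : 2/(3*(q:ℝ))/2 ≤ ((q:ℝ)-1)*(s-m) := by linarith [hlin, hMm, hcase]
    have hq1pos : (0:ℝ) < (q:ℝ)-1 := by linarith
    have hsmlb : 2/(3*(q:ℝ))/(2*((q:ℝ)-1)) ≤ s-m := by
      rw [div_le_iff₀ (by linarith : (0:ℝ) < 2*((q:ℝ)-1))]
      linarith [hsm2]
    have t0 : 0 ≤ (a-b)*(M+s-a-b) :=
      mul_nonneg (by linarith [hba]) (by linarith [hmM, hMsab])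
    have t1 : ((q:ℝ)-2)*(2/(3*(q:ℝ))/(2*((q:ℝ)-1)))*(2/(3*(q:ℝ))) ≤ ((q:ℝ)-2)*(s-m)*(M-m) := by
      apply mul_le_mul
      · exact mul_le_mul_of_nonneg_left hsmlb (by linarith)
      · exact hMm
      · positivity
      · exact mul_nonneg (by linarith) (by linarith [hms])
    have t2 : ((q:ℝ)-2)*(2/(3*(q:ℝ))/(2*((q:ℝ)-1)))*(2/(3*(q:ℝ)))
        = 2*((q:ℝ)-2)/(9*(q:ℝ)^2*((q:ℝ)-1)) := by
      field_simp
      ring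
    linarith [t0, t1, t2]

/-- Separation of coexisting symmetric and asymmetric minimizers and a uniform
energy gap between them (Lemma 5.9). -/
theorem potts_energy_gap (q : ℕ) [NeZero q] (hq : 4 ≤ q) :
    -- `x^A₁ < x^S₁` and `x^S_q < x^A_q`
    (∀ β h : ℝ, 0 ≤ β → h < 0 → ∀ xS xA : Fin q → ℝ,
      IsPottsMinimizer q β h xS → SymMinForm q xS →
      IsPottsMinimizer q β h xA → AsymForm q xA →
      xA 0 < xS 0 ∧ xS (lastIdx q) < xA (lastIdx q)) ∧
    -- a uniform gap `e_A - e_S ≥ c_q > 0` depending only on `q`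
    ∃ c : ℝ, 0 < c ∧
      ∀ β h : ℝ, 0 ≤ β → h < 0 → ∀ xS xA : Fin q → ℝ,
        IsPottsMinimizer q β h xS → SymMinForm q xS →
        IsPottsMinimizer q β h xA → AsymForm q xA →
        (∑ k, xA k ^ 2) - (∑ k, xS k ^ 2) ≥ c := by
  constructor
  · intro β h hβ hh xS xA minS formS minA formA
    obtain ⟨h1, h2, _⟩ := potts_key q hq β h hβ hh xS xA minS formS minA formA
    exact ⟨h1, h2⟩
  · refine ⟨2*((q:ℝ)-2)/(9*(q:ℝ)^2*((q:ℝ)-1)), ?_, ?_⟩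
    · have hQR : (4:ℝ) ≤ (q:ℝ) := by exact_mod_cast hq
      apply div_pos (by linarith : (0:ℝ) < 2*((q:ℝ)-2))
      exact mul_pos (by positivity : (0:ℝ) < 9*(q:ℝ)^2) (by linarith : (0:ℝ) < (q:ℝ)-1)
    · intro β h hβ hh xS xA minS formS minA formA
      exact (potts_key q hq β h hβ hh xS xA minS formS minA formA).2.2
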